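/- Let Q be a bounded quasinilpotent operator on a complex Banach space X and z ∈ G_Q (i.e., sup_{t≥0} ‖e^{tzQ}‖ < ∞). Set T_z := (I − zQ)^{-1}. Then sup_{k∈ℕ} (k+1)^{1/2} ‖(I − T_z) T_z^k‖ < ∞. -/

import Mathlib

open MeasureTheory NormedSpace Set Filter Topology Finset



lemma cb_sqrt (m : ℕ) : (Nat.centralBinom m : ℝ) * Real.sqrt (2*m+1) ≤ 4 ^ m := by
  induction m with
  | zero => simp [Nat.centralBinom]
  | succ m ih =>
    have key : (2*(m:ℝ)+1) * Real.sqrt (2*m+3) ≤ (2*m+2) * Real.sqrt (2*m+1) := by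
      have h1 : (0:ℝ) ≤ 2*m+1 := by positivity
      have h3 : (0:ℝ) ≤ 2*m+3 := by positivity
      nlinarith [Real.sq_sqrt h1, Real.sq_sqrt h3, Real.sqrt_nonneg (2*(m:ℝ)+1),
        Real.sqrt_nonneg (2*(m:ℝ)+3), sq_nonneg (Real.sqrt (2*(m:ℝ)+3) - Real.sqrt (2*(m:ℝ)+1)),
        sq_nonneg ((2*(m:ℝ)+1) * Real.sqrt (2*(m:ℝ)+3) - (2*m+2) * Real.sqrt (2*(m:ℝ)+1)),
        mul_nonneg (Real.sqrt_nonneg (2*(m:ℝ)+3)) (Real.sqrt_nonneg (2*(m:ℝ)+1))]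
    have hrec : ((m:ℝ)+1) * Nat.centralBinom (m+1) = 2 * (2*m+1) * Nat.centralBinom m := by
      exact_mod_cast congrArg (Nat.cast : ℕ → ℝ) (Nat.succ_mul_centralBinom_succ m)
    have hpos : (0:ℝ) < (m:ℝ)+1 := by positivity
    have goal' : ((m:ℝ)+1) * ((Nat.centralBinom (m+1) : ℝ) * Real.sqrt (2*(m+1)+1))
        ≤ ((m:ℝ)+1) * 4 ^ (m+1) := by
      calc ((m:ℝ)+1) * ((Nat.centralBinom (m+1) : ℝ) * Real.sqrt (2*(m+1)+1))
          = 2 * (Nat.centralBinom m : ℝ) * ((2*(m:ℝ)+1) * Real.sqrt (2*m+3)) := by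
            rw [show (2*((m:ℝ)+1)+1) = 2*m+3 by ring, ← mul_assoc, hrec]; ring
        _ ≤ 2 * (Nat.centralBinom m : ℝ) * ((2*m+2) * Real.sqrt (2*m+1)) := by
            exact mul_le_mul_of_nonneg_left key (by positivity)
        _ = (2*m+2) * 2 * ((Nat.centralBinom m : ℝ) * Real.sqrt (2*m+1)) := by ring
        _ ≤ (2*m+2) * 2 * 4^m := mul_le_mul_of_nonneg_left ih (by positivity)
        _ = ((m:ℝ)+1) * 4^(m+1) := by ring
    have := le_of_mul_le_mul_left (by push_cast at goal' ⊢; convert goal' using 2 <;> push_cast <;> ring) hpos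
    push_cast; exact this


lemma mono_choose {k r : ℕ} (h : 2*r < k) : k.choose r ≤ k.choose (r+1) := by
  rcases lt_or_ge r (k/2) with hr | hr
  · exact Nat.choose_le_succ_of_lt_half_left hr
  · have hk : k = 2*r+1 := by omega
    subst hk
    exact le_of_eq (Nat.choose_symm_half r).symm

lemma abs_sum_eq (k : ℕ) :
    ∑ j ∈ range (k+2), |(k.choose j : ℤ) - (if j = 0 then 0 else (k.choose (j-1) : ℤ))|
      = 2 * k.choose ((k+1)/2) := by
  set p := (k+1)/2 with hp
  set B : ℕ → ℤ := fun j => if j = 0 then 0 else (k.choose (j-1) : ℤ) with hB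
  set d : ℕ → ℤ := fun j => (k.choose j : ℤ) - (if j = 0 then 0 else (k.choose (j-1) : ℤ)) with hd
  have hBsucc : ∀ j, B (j+1) = (k.choose j : ℤ) := fun j => by simp [hB]
  have hdB : ∀ j, d j = B (j+1) - B j := fun j => by simp [hd, hB, hBsucc]
  have tel : ∀ n, ∑ j ∈ range n, d j = B n := by
    intro n
    simp only [hdB]
    rw [Finset.sum_range_sub B n]
    simp [hB]
  have hple : p + 1 ≤ k + 2 := by omega
  have nonneg : ∀ j ≤ p, 0 ≤ d j := by
    intro j hj
    match j with
    | 0 => simp [hd]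
    | r+1 =>
      have h2 : 2*r < k := by
        have := (Nat.le_div_iff_mul_le (by norm_num : 0 < 2)).mp (hp ▸ hj)
        omega
      simp only [hd]
      have := mono_choose h2
      simp only [Nat.add_sub_cancel, if_neg (Nat.succ_ne_zero r)]
      exact sub_nonneg.mpr (by exact_mod_cast this)
  have nonpos : ∀ j, p+1 ≤ j → d j ≤ 0 := by
    intro j hj
    have hj1 : 1 ≤ j := by omega
    have hlt : k + 1 < 2*j := by
      have := (Nat.div_lt_iff_lt_mul (by norm_num : 0 < 2)).mp (show (k+1)/2 < j by omega)
      omega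
    rcases lt_or_ge k j with hkj | hkj
    · -- j > k: choose k j = 0
      simp only [hd, Nat.choose_eq_zero_of_lt hkj, if_neg (by omega : ¬ j = 0)]
      omega
    · have hsym1 : k.choose j = k.choose (k-j) := (Nat.choose_symm hkj).symm
      have hsym2 : k.choose (j-1) = k.choose (k-j+1) := by
        rw [← Nat.choose_symm (by omega : j-1 ≤ k)]
        congr 1
        omega
      have hmono := mono_choose (show 2*(k-j) < k by omega)
      simp only [hd, if_neg (by omega : ¬ j = 0)]
      rw [hsym1, hsym2]
      exact sub_nonpos.mpr (by exact_mod_cast hmono)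
  have split : ∑ j ∈ range (k+2), |d j|
      = (∑ j ∈ range (p+1), |d j|) + ∑ j ∈ Ico (p+1) (k+2), |d j| := by
    rw [range_eq_Ico, range_eq_Ico, Finset.sum_Ico_consecutive _ (Nat.zero_le _) hple]
  have first : ∑ j ∈ range (p+1), |d j| = k.choose p := by
    rw [Finset.sum_congr rfl (fun j hj => abs_of_nonneg (nonneg j (by
      simp only [Finset.mem_range] at hj; omega))), tel, hBsucc]
  have second : ∑ j ∈ Ico (p+1) (k+2), |d j| = k.choose p := by
    have h1 : ∑ j ∈ Ico (p+1) (k+2), |d j| = ∑ j ∈ Ico (p+1) (k+2), -(d j) := by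
      refine Finset.sum_congr rfl (fun j hj => abs_of_nonpos (nonpos j ?_))
      simp only [Finset.mem_Ico] at hj; omega
    rw [h1, Finset.sum_neg_distrib]
    have h2 : ∑ j ∈ Ico (p+1) (k+2), d j
        = (∑ j ∈ range (k+2), d j) - ∑ j ∈ range (p+1), d j := by
      rw [range_eq_Ico, range_eq_Ico, ← Finset.sum_Ico_consecutive _ (Nat.zero_le _) hple]
      ring
    rw [h2, tel, tel]
    have e1 : B (k+2) = 0 := by
      have hkk : k+2-1 = k+1 := by omega
      rw [hB]; simp only [hkk]
      rw [if_neg (by omega : ¬ k+2 = 0), Nat.choose_eq_zero_of_lt (by omega)]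
      simp
    rw [e1, hBsucc p]
    simp
  rw [split, first, second]
  push_cast
  ring

lemma peak_bound (k : ℕ) :
    (k.choose ((k+1)/2) : ℝ) * Real.sqrt (k+1) ≤ Real.sqrt 2 * 2^k := by
  have h2 : (1:ℝ) ≤ Real.sqrt 2 := Real.one_le_sqrt.mpr (by norm_num)
  rcases Nat.even_or_odd k with ⟨m, hm⟩ | ⟨m, hm⟩
  · subst hm
    have hp : (m+m+1)/2 = m := by omega
    rw [hp]
    have hc : (m+m).choose m = Nat.centralBinom m := by rw [Nat.centralBinom]; congr 1; omega
    rw [hc]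
    calc (Nat.centralBinom m : ℝ) * Real.sqrt (↑(m+m)+1)
        = (Nat.centralBinom m : ℝ) * Real.sqrt (2*↑m+1) := by norm_num; left; congr 1; push_cast; ring
      _ ≤ 4^m := cb_sqrt m
      _ = 2^(m+m) := by rw [show (4:ℝ) = 2^2 by norm_num, ← pow_mul]; congr 1; omega
      _ ≤ Real.sqrt 2 * 2^(m+m) := le_mul_of_one_le_left (by positivity) h2
  · subst hm
    have hp : (2*m+1+1)/2 = m+1 := by omega
    rw [hp]
    have hc : (2*m+1).choose (m+1) ≤ 2 * Nat.centralBinom m := by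
      rw [show 2*m+1 = (2*m)+1 by ring, Nat.choose_succ_succ]
      have := Nat.choose_le_middle (m+1) (2*m)
      rw [show (2*m)/2 = m by omega] at this
      have hcb : (2*m).choose m = Nat.centralBinom m := rfl
      simp only [Nat.succ_eq_add_one] at *
      omega
    have hsq : Real.sqrt (↑(2*m+1)+1) ≤ Real.sqrt 2 * Real.sqrt (2*↑m+1) := by
      rw [← Real.sqrt_mul (by norm_num)]
      apply Real.sqrt_le_sqrt
      push_cast; nlinarith [Nat.cast_nonneg (α := ℝ) m]
    calc ((2*m+1).choose (m+1) : ℝ) * Real.sqrt (↑(2*m+1)+1)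
        ≤ (2 * Nat.centralBinom m : ℝ) * (Real.sqrt 2 * Real.sqrt (2*↑m+1)) := by
          apply mul_le_mul (by exact_mod_cast hc) hsq (Real.sqrt_nonneg _) (by positivity)
      _ = Real.sqrt 2 * 2 * ((Nat.centralBinom m : ℝ) * Real.sqrt (2*↑m+1)) := by push_cast; ring
      _ ≤ Real.sqrt 2 * 2 * 4^m := by
          apply mul_le_mul_of_nonneg_left (cb_sqrt m) (by positivity)
      _ = Real.sqrt 2 * 2^(2*m+1) := by
          rw [show (4:ℝ) = 2^2 by norm_num, ← pow_mul]
          ring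

lemma expand_eq {A : Type*} [Ring A] (T : A) (k : ℕ) :
    (1 - T) * (1 + T)^k
      = ∑ j ∈ range (k+2),
          ((k.choose j : ℤ) - (if j = 0 then 0 else (k.choose (j-1) : ℤ))) • T^j := by
  have hexp : (1+T)^k = ∑ j ∈ range (k+1), (k.choose j : ℤ) • T^j := by
    rw [add_comm 1 T, (Commute.one_right T).add_pow k]
    refine Finset.sum_congr rfl (fun j hj => ?_)
    rw [one_pow, mul_one, natCast_zsmul, nsmul_eq_mul, (Nat.cast_commute (k.choose j) (T^j)).eq]
  have lhs : (1 - T) * (1 + T)^k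
      = (∑ j ∈ range (k+1), (k.choose j : ℤ) • T^j)
        - ∑ j ∈ range (k+1), (k.choose j : ℤ) • T^(j+1) := by
    rw [sub_mul, one_mul, hexp, Finset.mul_sum]
    congr 1
    refine Finset.sum_congr rfl (fun j hj => ?_)
    rw [mul_smul_comm, ← pow_succ']
  rw [lhs]
  have rhs : ∑ j ∈ range (k+2),
        ((k.choose j : ℤ) - (if j = 0 then 0 else (k.choose (j-1) : ℤ))) • T^j
      = (∑ j ∈ range (k+2), (k.choose j : ℤ) • T^j)
        - ∑ j ∈ range (k+2), (if j = 0 then (0:ℤ) else (k.choose (j-1) : ℤ)) • T^j := by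
    rw [← Finset.sum_sub_distrib]
    exact Finset.sum_congr rfl (fun j hj => by rw [sub_smul])
  rw [rhs]
  congr 1
  · rw [Finset.sum_range_succ (fun j => ((k.choose j : ℤ)) • T^j) (k+1),
      Nat.choose_eq_zero_of_lt (by omega : k < k+1), Int.natCast_zero, zero_smul, add_zero]
  · rw [Finset.sum_range_succ' (fun j => (if j = 0 then (0:ℤ) else (k.choose (j-1) : ℤ)) • T^j) (k+1)]
    simp

lemma expand_bound {A : Type*} [NormedRing A] (T : A) (C : ℝ) (hC : ∀ j, ‖T^j‖ ≤ C)
    (k : ℕ)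
    (habs : ∑ j ∈ range (k+2), |(k.choose j : ℤ) - (if j = 0 then 0 else (k.choose (j-1) : ℤ))|
      = 2 * k.choose ((k+1)/2)) :
    ‖(1 - T) * (1 + T)^k‖ ≤ 2 * (k.choose ((k+1)/2)) * C := by
  have hC0 : 0 ≤ C := le_trans (norm_nonneg _) (hC 0)
  rw [expand_eq]
  calc ‖∑ j ∈ range (k+2),
        ((k.choose j : ℤ) - (if j = 0 then 0 else (k.choose (j-1) : ℤ))) • T^j‖
      ≤ ∑ j ∈ range (k+2),
        ‖((k.choose j : ℤ) - (if j = 0 then 0 else (k.choose (j-1) : ℤ))) • T^j‖ :=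
        norm_sum_le _ _
    _ ≤ ∑ j ∈ range (k+2),
        ‖(k.choose j : ℤ) - (if j = 0 then 0 else (k.choose (j-1) : ℤ))‖ * C := by
        refine Finset.sum_le_sum (fun j hj => ?_)
        refine le_trans (norm_zsmul_le _ _) ?_
        exact mul_le_mul_of_nonneg_left (hC j) (norm_nonneg _)
    _ = ((∑ j ∈ range (k+2),
        |(k.choose j : ℤ) - (if j = 0 then 0 else (k.choose (j-1) : ℤ))| : ℤ) : ℝ) * C := by
        rw [← Finset.sum_mul]
        congr 1
        push_cast [Int.norm_eq_abs]
        ring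
    _ = 2 * (k.choose ((k+1)/2)) * C := by rw [habs]; push_cast; ring
set_option synthInstance.maxHeartbeats 1000000
set_option maxHeartbeats 1000000

lemma isUnit_one_sub_smul {X : Type*} [NormedAddCommGroup X] [NormedSpace ℂ X] [CompleteSpace X]
    (Q : X →L[ℂ] X) (hQ : spectrum ℂ Q = {0}) (w : ℂ) : IsUnit (1 - w • Q) := by
  rcases eq_or_ne w 0 with rfl | hw
  · simpa using isUnit_one
  · have h1 : (1:ℂ) ∉ spectrum ℂ (w • Q) := by
      rw [show w • Q = (Units.mk0 w hw) • Q from rfl, spectrum.unit_smul_eq_smul, hQ]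
      simp only [Set.smul_set_singleton, smul_zero, Set.mem_singleton_iff]
      exact one_ne_zero
    have := spectrum.notMem_iff.mp h1
    simpa using this

lemma psi_integral (m : ℕ) : ∫ t in Ioi (0:ℝ), t ^ m * Real.exp (-t) = (Nat.factorial m : ℝ) := by
  have h1 : (0:ℝ) < m + 1 := by positivity
  have h2 := Real.Gamma_eq_integral h1
  rw [Real.Gamma_nat_eq_factorial] at h2
  rw [h2]
  refine setIntegral_congr_fun measurableSet_Ioi (fun x hx => ?_)
  rw [show ((m:ℝ)+1-1) = (m:ℝ) by ring, Real.rpow_natCast]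
  ring

lemma psi_integrable (m : ℕ) :
    IntegrableOn (fun t : ℝ => t ^ m * Real.exp (-t)) (Ioi 0) := by
  have := Real.GammaIntegral_convergent (show (0:ℝ) < m + 1 by positivity)
  refine (this.congr_fun (fun x hx => ?_) measurableSet_Ioi)
  dsimp only
  rw [show ((m:ℝ)+1-1) = (m:ℝ) by ring, Real.rpow_natCast]
  ring

lemma psi_cont (m : ℕ) : Continuous (fun t : ℝ => t ^ m * Real.exp (-t)) := by fun_prop

lemma hy {X : Type*} [NormedAddCommGroup X] [NormedSpace ℂ X] [CompleteSpace X]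
    (Q : X →L[ℂ] X) (hQ : spectrum ℂ Q = {0}) (z : ℂ) (C : ℝ)
    (hC : ∀ t : ℝ, 0 ≤ t → ‖NormedSpace.exp (((t : ℂ) * z) • Q)‖ ≤ C)
    (s : ℝ) (hs : 0 < s) (k : ℕ) :
    ‖(Ring.inverse (1 - ((s:ℂ) * z) • Q)) ^ k‖ ≤ max C 1 := by
  set B : X →L[ℂ] X := ((s:ℂ) * z) • Q with hB
  set C' : ℝ := max C 1 with hC'def
  have hC'0 : (0:ℝ) ≤ C' := le_trans zero_le_one (le_max_right _ _)
  -- the semigroup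
  set E : ℝ → (X →L[ℂ] X) := fun t => NormedSpace.exp ((t:ℂ) • B) with hE
  have hEbound : ∀ t : ℝ, 0 ≤ t → ‖E t‖ ≤ C' := by
    intro t ht
    have h : (t:ℂ) • B = (((t*s : ℝ) : ℂ) * z) • Q := by
      rw [hB, smul_smul]; push_cast; ring_nf
    rw [hE]; simp only [h]
    exact le_trans (hC (t*s) (mul_nonneg ht hs.le)) (le_max_left _ _)
  have hEcont : Continuous E :=
    (continuous_iff_continuousAt.2 fun x => (NormedSpace.exp_analytic (𝕂 := ℂ) x).continuousAt).comp (Complex.continuous_ofReal.smul continuous_const)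
  have hEderiv : ∀ t : ℝ, HasDerivAt E (E t * B) t := by
    intro t
    have h1 : HasDerivAt (fun u : ℂ => NormedSpace.exp (u • B))
        (NormedSpace.exp ((t:ℂ) • B) * B) ((t:ℂ)) := hasDerivAt_exp_smul_const B (t:ℂ)
    have h2 : HasDerivAt (fun t : ℝ => (t:ℂ)) 1 t := by
      simpa using (hasDerivAt_id t).ofReal_comp
    have h3 := HasDerivAt.scomp t h1 h2
    rw [one_smul] at h3
    exact h3
  -- the weight functions
  set ψ : ℕ → ℝ → ℝ := fun n t => t ^ n * Real.exp (-t) with hψ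
  have hψderiv : ∀ n : ℕ, ∀ t : ℝ,
      HasDerivAt (ψ (n+1)) (((n:ℝ)+1) * ψ n t - ψ (n+1) t) t := by
    intro n t
    have h1 : HasDerivAt (fun t : ℝ => t ^ (n+1)) (((n:ℝ)+1) * t^n) t := by
      simpa using hasDerivAt_pow (n+1) t
    have h2 : HasDerivAt (fun t : ℝ => Real.exp (-t)) (-Real.exp (-t)) t := by
      simpa [Function.comp_def] using (Real.hasDerivAt_exp (-t)).comp t (hasDerivAt_neg t)
    have := h1.mul h2
    refine this.congr_deriv ?_
    simp only [hψ]; ring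
  have hψ0deriv : ∀ t : ℝ, HasDerivAt (ψ 0) (-ψ 0 t) t := by
    intro t
    have h2 : HasDerivAt (fun t : ℝ => Real.exp (-t)) (-Real.exp (-t)) t := by
      simpa [Function.comp_def] using (Real.hasDerivAt_exp (-t)).comp t (hasDerivAt_neg t)
    have h3 : HasDerivAt (ψ 0) (-Real.exp (-t)) t := by
      refine h2.congr_of_eventuallyEq ?_
      filter_upwards with x
      simp [hψ]
    simpa [hψ] using h3
  -- integrability
  have gmeas : ∀ n : ℕ, AEStronglyMeasurable (fun t => ψ n t • E t)
      (volume.restrict (Ioi (0:ℝ))) :=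
    fun n => (Continuous.smul (psi_cont n) hEcont).aestronglyMeasurable
  have gbound : ∀ n : ℕ, ∀ t ∈ Ioi (0:ℝ), ‖ψ n t • E t‖ ≤ C' * ψ n t := by
    intro n t ht
    have ht' : (0:ℝ) ≤ t := le_of_lt ht
    have hψnn : 0 ≤ ψ n t := by simp only [hψ]; positivity
    rw [norm_smul (ψ n t) (E t), Real.norm_eq_abs, abs_of_nonneg hψnn, mul_comm]
    exact mul_le_mul_of_nonneg_right (hEbound t ht') hψnn
  have gint : ∀ n : ℕ, IntegrableOn (fun t => ψ n t • E t) (Ioi (0:ℝ)) := by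
    intro n
    refine Integrable.mono' ((psi_integrable n).const_mul C') (gmeas n) ?_
    rw [ae_restrict_iff' measurableSet_Ioi]
    filter_upwards with t ht
    exact gbound n t ht
  have gBmeas : ∀ n : ℕ, AEStronglyMeasurable (fun t => ψ n t • (E t * B))
      (volume.restrict (Ioi (0:ℝ))) :=
    fun n => (Continuous.smul (psi_cont n) (hEcont.mul continuous_const)).aestronglyMeasurable
  have gBint : ∀ n : ℕ, IntegrableOn (fun t => ψ n t • (E t * B)) (Ioi (0:ℝ)) := by
    intro n
    refine Integrable.mono' (((psi_integrable n).const_mul C').const_mul ‖B‖) (gBmeas n) ?_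
    rw [ae_restrict_iff' measurableSet_Ioi]
    filter_upwards with t ht
    have ht' : (0:ℝ) ≤ t := le_of_lt ht
    have hψnn : 0 ≤ ψ n t := by simp only [hψ]; positivity
    rw [norm_smul (ψ n t) (E t * B), Real.norm_eq_abs, abs_of_nonneg hψnn]
    calc ψ n t * ‖E t * B‖ ≤ ψ n t * (‖E t‖ * ‖B‖) :=
          mul_le_mul_of_nonneg_left (norm_mul_le _ _) hψnn
      _ ≤ ψ n t * (C' * ‖B‖) := by
          refine mul_le_mul_of_nonneg_left ?_ hψnn
          exact mul_le_mul_of_nonneg_right (hEbound t ht') (norm_nonneg _)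
      _ = ‖B‖ * (C' * ψ n t) := by ring
  -- the integrals
  set G : ℕ → (X →L[ℂ] X) := fun n => ∫ t in Ioi (0:ℝ), ψ n t • E t with hG
  -- decay at infinity
  have gtend : ∀ n : ℕ, Tendsto (fun t => ψ n t • E t) atTop (𝓝 0) := by
    intro n
    refine squeeze_zero_norm' (a := fun t => C' * ψ n t) ?_ ?_
    · filter_upwards [eventually_ge_atTop (0:ℝ)] with t ht
      have hψnn : 0 ≤ ψ n t := by simp only [hψ]; positivity
      calc ‖ψ n t • E t‖ = ‖E t‖ * ψ n t := by
            rw [norm_smul (ψ n t) (E t), Real.norm_eq_abs, abs_of_nonneg hψnn, mul_comm]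
        _ ≤ C' * ψ n t := mul_le_mul_of_nonneg_right (hEbound t ht) hψnn
    · have := (Real.tendsto_pow_mul_exp_neg_atTop_nhds_zero n).const_mul C'
      simpa [hψ, mul_comm, mul_zero] using this
  -- integral of the (E*B) term
  have intEB : ∀ n : ℕ, ∫ t in Ioi (0:ℝ), ψ n t • (E t * B) = G n * B := by
    intro n
    set L : (X →L[ℂ] X) →L[ℂ] (X →L[ℂ] X) := (ContinuousLinearMap.mul ℂ (X →L[ℂ] X)).flip B
      with hL
    have hLapp : ∀ a : X →L[ℂ] X, L a = a * B := fun a => rfl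
    have h : ∀ t : ℝ, ψ n t • (E t * B) = L (ψ n t • E t) := by
      intro t
      rw [hLapp, smul_mul_assoc]
    simp_rw [h]
    rw [ContinuousLinearMap.integral_comp_comm L (gint n), hLapp]
  -- base case of recurrence
  have hG0 : ∫ t in Ioi (0:ℝ), ψ 0 t • E t = G 0 := rfl
  have rec0 : G 0 * (1 - B) = 1 := by
    have heq : ∀ t : ℝ, ψ 0 t • (E t * B) + (-ψ 0 t) • E t
        = ψ 0 t • (E t * B) - ψ 0 t • E t := by
      intro t; rw [neg_smul, ← sub_eq_add_neg]
    have hFTC := integral_Ioi_of_hasDerivAt_of_tendsto'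
      (f := fun t => ψ 0 t • E t)
      (f' := fun t => ψ 0 t • (E t * B) - ψ 0 t • E t)
      (a := 0) (m := 0)
      (fun t _ => by
        show HasDerivAt (fun u => ψ 0 u • E u) (ψ 0 t • (E t * B) - ψ 0 t • E t) t
        rw [← heq t]
        exact (hψ0deriv t).smul (hEderiv t))
      (((gBint 0).sub (gint 0)))
      (gtend 0)
    have h0 : ψ 0 0 • E 0 = 1 := by
      simp [hψ, hE]
    simp only [h0, zero_sub] at hFTC
    rw [integral_sub (gBint 0) (gint 0), intEB 0, hG0] at hFTC
    rw [mul_one_sub, ← neg_sub (G 0 * B) (G 0), hFTC, neg_neg]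
  -- inductive step of recurrence
  have recstep : ∀ n : ℕ, G (n+1) * (1 - B) = ((n:ℝ)+1) • G n := by
    intro n
    have heq : ∀ t : ℝ, ψ (n+1) t • (E t * B) + (((n:ℝ)+1) * ψ n t - ψ (n+1) t) • E t
        = ψ (n+1) t • (E t * B) + (((n:ℝ)+1) • (ψ n t • E t) - ψ (n+1) t • E t) := by
      intro t
      rw [sub_smul]
      congr 2
      exact mul_smul ((n:ℝ)+1) (ψ n t) (E t)
    have gint' : IntegrableOn (fun t => ((n:ℝ)+1) • (ψ n t • E t)) (Ioi (0:ℝ)) :=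
      (gint n).smul ((n:ℝ)+1)
    have hsub : IntegrableOn (fun t => ((n:ℝ)+1) • (ψ n t • E t) - ψ (n+1) t • E t)
        (Ioi (0:ℝ)) := gint'.sub (gint (n+1))
    have hFTC := integral_Ioi_of_hasDerivAt_of_tendsto'
      (f := fun t => ψ (n+1) t • E t)
      (f' := fun t => ψ (n+1) t • (E t * B) + (((n:ℝ)+1) • (ψ n t • E t) - ψ (n+1) t • E t))
      (a := 0) (m := 0)
      (fun t _ => by
        show HasDerivAt (fun u => ψ (n+1) u • E u)
          (ψ (n+1) t • (E t * B) + (((n:ℝ)+1) • (ψ n t • E t) - ψ (n+1) t • E t)) t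
        rw [← heq t]
        exact (hψderiv n t).smul (hEderiv t))
      ((gBint (n+1)).add hsub)
      (gtend (n+1))
    have h0 : ψ (n+1) 0 • E 0 = 0 := by
      simp [hψ]
    simp only [h0, sub_zero] at hFTC
    rw [integral_add (gBint (n+1)) hsub,
      integral_sub gint' (gint (n+1)), integral_smul, intEB (n+1)] at hFTC
    have hGn : (∫ t in Ioi (0:ℝ), ψ n t • E t) = G n := rfl
    have hGn1 : (∫ t in Ioi (0:ℝ), ψ (n+1) t • E t) = G (n+1) := rfl
    rw [hGn, hGn1] at hFTC
    rw [mul_one_sub, ← sub_eq_zero, ← neg_eq_zero]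
    have hre : -(G (n+1) - G (n+1) * B - ((n:ℝ)+1) • G n)
        = G (n+1) * B + (((n:ℝ)+1) • G n - G (n+1)) := by abel
    rw [hre, hFTC]
  -- the power identity
  have hGpow : ∀ n : ℕ, G n * (1 - B)^(n+1) = (Nat.factorial n : ℝ) • 1 := by
    intro n
    induction n with
    | zero =>
      simp only [zero_add, pow_one, rec0, Nat.factorial_zero, Nat.cast_one, one_smul]
    | succ n ih =>
      have : (1 - B)^(n+2) = (1 - B) * (1 - B)^(n+1) := pow_succ' (1-B) (n+1)
      rw [this, ← mul_assoc, recstep n, smul_mul_assoc, ih, smul_smul]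
      congr 1
      rw [Nat.factorial_succ]
      push_cast; ring
  -- invertibility
  have hu : IsUnit (1 - B) := isUnit_one_sub_smul Q hQ ((s:ℂ)*z)
  obtain ⟨u, huu⟩ := hu
  -- conclude
  rcases k with _ | m
  · rw [pow_zero]
    have h1 : ‖(1 : X →L[ℂ] X)‖ ≤ 1 := by
      rw [ContinuousLinearMap.one_def]
      exact ContinuousLinearMap.norm_id_le
    exact le_trans h1 (le_max_right C 1)
  · have hfac0 : (Nat.factorial m : ℝ) ≠ 0 := by
      exact_mod_cast (Nat.factorial_pos m).ne'
    have hGm := hGpow m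
    rw [← huu] at hGm
    rw [← huu, Ring.inverse_unit]
    have h3 : G m * ((u^(m+1) : (X →L[ℂ] X)ˣ) : X →L[ℂ] X) = (Nat.factorial m : ℝ) • 1 := by
      rw [Units.val_pow_eq_pow_val]; exact hGm
    have h4 : G m = (Nat.factorial m : ℝ) • (((u^(m+1))⁻¹ : (X →L[ℂ] X)ˣ) : X →L[ℂ] X) := by
      calc G m = (G m * ((u^(m+1) : (X →L[ℂ] X)ˣ) : X →L[ℂ] X))
            * (((u^(m+1))⁻¹ : (X →L[ℂ] X)ˣ) : X →L[ℂ] X) := by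
            rw [mul_assoc, ← Units.val_mul, mul_inv_cancel, Units.val_one, mul_one]
        _ = ((Nat.factorial m : ℝ) • (1: X →L[ℂ] X))
            * (((u^(m+1))⁻¹ : (X →L[ℂ] X)ˣ) : X →L[ℂ] X) := by rw [h3]
        _ = (Nat.factorial m : ℝ) • (((u^(m+1))⁻¹ : (X →L[ℂ] X)ˣ) : X →L[ℂ] X) := by
            rw [smul_mul_assoc, one_mul]
    have h5 : ((↑u⁻¹ : X →L[ℂ] X))^(m+1) = ((Nat.factorial m : ℝ))⁻¹ • G m := by
      rw [← Units.val_pow_eq_pow_val, inv_pow, h4, smul_smul,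
        inv_mul_cancel₀ hfac0, one_smul]
    rw [h5]
    have hnorm : ‖G m‖ ≤ C' * (Nat.factorial m : ℝ) := by
      have hle := norm_integral_le_of_norm_le ((psi_integrable m).const_mul C')
        (by rw [ae_restrict_iff' measurableSet_Ioi]; filter_upwards with t ht;
            exact gbound m t ht)
      calc ‖G m‖ ≤ ∫ t in Ioi (0:ℝ), C' * ψ m t := hle
        _ = C' * ∫ t in Ioi (0:ℝ), ψ m t := by rw [MeasureTheory.integral_const_mul]
        _ = C' * (Nat.factorial m : ℝ) := by rw [hψ, psi_integral m]
    calc ‖((Nat.factorial m : ℝ))⁻¹ • G m‖ = ((Nat.factorial m : ℝ))⁻¹ * ‖G m‖ := by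
          rw [norm_smul ((Nat.factorial m : ℝ))⁻¹ (G m), Real.norm_eq_abs,
            abs_of_nonneg (by positivity : (0:ℝ) ≤ ((Nat.factorial m : ℝ))⁻¹)]
      _ ≤ ((Nat.factorial m : ℝ))⁻¹ * (C' * (Nat.factorial m : ℝ)) := by
          exact mul_le_mul_of_nonneg_left hnorm (by positivity)
      _ = C' := by field_simp

theorem weaker_tauberian_on_semigroup_set
    {X : Type*} [NormedAddCommGroup X] [NormedSpace ℂ X] [CompleteSpace X]
    (Q : X →L[ℂ] X) (hQ : spectrum ℂ Q = {0}) (z : ℂ)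
    (hz : ∃ C : ℝ, ∀ t : ℝ, 0 ≤ t →
        ‖NormedSpace.exp (((t : ℂ) * z) • Q)‖ ≤ C) :
    ∃ C : ℝ, ∀ k : ℕ,
      Real.sqrt (k + 1) *
        ‖(1 - Ring.inverse (1 - z • Q)) * (Ring.inverse (1 - z • Q)) ^ k‖ ≤ C := by
  obtain ⟨C, hC⟩ := hz
  set C' : ℝ := max C 1 with hC'def
  have hC'0 : (0:ℝ) ≤ C' := le_trans zero_le_one (le_max_right _ _)
  set T : X →L[ℂ] X := Ring.inverse (1 - z • Q) with hTdef
  set cw : ℂ := ((1/2:ℝ):ℂ) * z with hcw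
  -- power bounds from Hille-Yosida
  have hTb : ∀ j : ℕ, ‖T ^ j‖ ≤ C' := by
    intro j
    have h := hy Q hQ z C hC 1 one_pos j
    rw [show (((1:ℝ):ℂ) * z) = z by push_cast; ring] at h
    exact h
  have hWb : ∀ j : ℕ, ‖(Ring.inverse (1 - cw • Q)) ^ j‖ ≤ C' := by
    intro j
    exact hy Q hQ z C hC (1/2) (by norm_num) j
  -- units
  have hu1 : IsUnit (1 - z • Q) := isUnit_one_sub_smul Q hQ z
  have huW : IsUnit (1 - cw • Q) := isUnit_one_sub_smul Q hQ cw
  obtain ⟨u1, hu1e⟩ := hu1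
  obtain ⟨uW, huWe⟩ := huW
  have hu1' : IsUnit (1 - z • Q) := ⟨u1, hu1e⟩
  -- commutation
  have hQQ : Commute (cw • Q) (z • Q) := ((Commute.refl Q).smul_right z).smul_left cw
  have hCW : Commute (1 - cw • Q) (1 - z • Q) :=
    (Commute.one_left _).sub_left ((Commute.one_right _).sub_right hQQ)
  have hu1T : T = ↑u1⁻¹ := by rw [hTdef, ← hu1e, Ring.inverse_unit]
  have hCWT : Commute (1 - cw • Q) T := by
    rw [hu1T]
    have h := hCW
    rw [← hu1e] at h
    exact h.units_inv_right
  have hCTuW : Commute T ((uW⁻¹ : (X →L[ℂ] X)ˣ) : X →L[ℂ] X) := by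
    have h := hCWT.symm
    rw [← huWe] at h
    exact h.units_inv_right
  have hRW : Ring.inverse (1 - cw • Q) = ((uW⁻¹ : (X →L[ℂ] X)ˣ) : X →L[ℂ] X) := by
    rw [← huWe, Ring.inverse_unit]
  -- 2 • W = (1 - z Q) + 1
  have h2W : (2:ℂ) • (1 - cw • Q) = (1 - z • Q) + 1 := by
    rw [smul_sub, smul_smul, show (2:ℂ) * cw = z by rw [hcw]; push_cast; ring, two_smul]
    abel
  -- 1 + T = (2 • W) * T
  have h1T : 1 + T = ((2:ℂ) • (1 - cw • Q)) * T := by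
    calc (1:X →L[ℂ] X) + T = (1 - z • Q) * T + 1 * T := by
          rw [hTdef, Ring.mul_inverse_cancel _ hu1', one_mul]
      _ = ((1 - z • Q) + 1) * T := (add_mul _ _ _).symm
      _ = ((2:ℂ) • (1 - cw • Q)) * T := by rw [h2W]
  -- the key identity
  have hkey : ∀ k : ℕ, (1 + T)^k * ((uW⁻¹ : (X →L[ℂ] X)ˣ) : X →L[ℂ] X)^k
      = (2:ℂ)^k • T^k := by
    intro k
    have hpow : (1 + T)^k = (2:ℂ)^k • ((1 - cw • Q)^k * T^k) := by
      rw [h1T, (hCWT.smul_left (2:ℂ)).mul_pow, smul_pow, smul_mul_assoc]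
    rw [hpow, smul_mul_assoc]
    congr 1
    rw [mul_assoc, (hCTuW.pow_pow k k).eq, ← mul_assoc]
    have hWW : (1 - cw • Q)^k * ((uW⁻¹ : (X →L[ℂ] X)ˣ) : X →L[ℂ] X)^k = 1 := by
      rw [← huWe, ← Units.val_pow_eq_pow_val, ← Units.val_pow_eq_pow_val, ← Units.val_mul,
        inv_pow, mul_inv_cancel, Units.val_one]
    rw [hWW, one_mul]
  -- conclude
  refine ⟨2 * Real.sqrt 2 * C'^2, fun k => ?_⟩
  have h2k : ((2:ℝ)^k) ≠ 0 := by positivity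
  have hfinal : (1 - T) * T^k
      = (((2:ℂ)^k)⁻¹) • ((1 - T) * (1 + T)^k * ((uW⁻¹ : (X →L[ℂ] X)ˣ) : X →L[ℂ] X)^k) := by
    rw [mul_assoc, hkey k, mul_smul_comm, smul_smul,
      inv_mul_cancel₀ (pow_ne_zero k (two_ne_zero : (2:ℂ) ≠ 0)), one_smul]
  rw [hfinal]
  have hn1 : ‖(((2:ℂ)^k)⁻¹)‖ = ((2:ℝ)^k)⁻¹ := by
    rw [norm_inv, norm_pow]
    norm_num
  have hb1 : ‖(1 - T) * (1 + T)^k‖ ≤ 2 * (k.choose ((k+1)/2)) * C' :=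
    expand_bound T C' hTb k (abs_sum_eq k)
  have hb2 : ‖((uW⁻¹ : (X →L[ℂ] X)ˣ) : X →L[ℂ] X)^k‖ ≤ C' := by
    have := hWb k
    rw [hRW] at this
    exact this
  have hprod : ‖(1 - T) * (1 + T)^k * ((uW⁻¹ : (X →L[ℂ] X)ˣ) : X →L[ℂ] X)^k‖
      ≤ (2 * (k.choose ((k+1)/2)) * C') * C' := by
    refine le_trans (norm_mul_le _ _) ?_
    exact mul_le_mul hb1 hb2 (norm_nonneg _) (by positivity)
  have hns : ‖(((2:ℂ)^k)⁻¹) • ((1 - T) * (1 + T)^k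
        * ((uW⁻¹ : (X →L[ℂ] X)ˣ) : X →L[ℂ] X)^k)‖
      ≤ ((2:ℝ)^k)⁻¹ * ((2 * (k.choose ((k+1)/2)) * C') * C') := by
    rw [norm_smul (((2:ℂ)^k)⁻¹) ((1 - T) * (1 + T)^k
        * ((uW⁻¹ : (X →L[ℂ] X)ˣ) : X →L[ℂ] X)^k), hn1]
    exact mul_le_mul_of_nonneg_left hprod (by positivity)
  have hsqrt : (0:ℝ) ≤ Real.sqrt (k+1) := Real.sqrt_nonneg _
  calc Real.sqrt (k+1) * ‖(((2:ℂ)^k)⁻¹) • ((1 - T) * (1 + T)^k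
        * ((uW⁻¹ : (X →L[ℂ] X)ˣ) : X →L[ℂ] X)^k)‖
      ≤ Real.sqrt (k+1) * (((2:ℝ)^k)⁻¹ * ((2 * (k.choose ((k+1)/2)) * C') * C')) :=
        mul_le_mul_of_nonneg_left hns hsqrt
    _ = (2 * C'^2 * ((2:ℝ)^k)⁻¹) * ((k.choose ((k+1)/2) : ℝ) * Real.sqrt (k+1)) := by ring
    _ ≤ (2 * C'^2 * ((2:ℝ)^k)⁻¹) * (Real.sqrt 2 * 2^k) :=
        mul_le_mul_of_nonneg_left (peak_bound k) (by positivity)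
    _ = 2 * Real.sqrt 2 * C'^2 := by field_simp
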